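/- If G is a cograph, then the maximum size of a set of edges of G no two of which lie in a common clique equals the maximum, over all independent sets A of vertices of G, of the sum over x ∈ A of α(G[N(x)]), the independence number of the subgraph induced by the neighborhood of x. -/

import Mathlib

open SimpleGraph

/-- `A` is an independent set of edges of `G`: no two members lie in a common
clique of `G`. -/
def EdgeIndep {V : Type*} (G : SimpleGraph V) (A : Set (Sym2 V)) : Prop :=
  A ⊆ G.edgeSet ∧
    A.Pairwise fun e f => ¬ G.IsClique {x | x ∈ e ∨ x ∈ f}

/-- `α'(G) = α(K_e(G))`, the maximum size of an independent set of edges. -/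
noncomputable def alphaPrime {V : Type*} (G : SimpleGraph V) : ℕ :=
  sSup {k | ∃ A : Finset (Sym2 V), EdgeIndep G ↑A ∧ A.card = k}

/-- The independence number `α(G)`. -/
noncomputable def indepNumber {V : Type*} (G : SimpleGraph V) : ℕ :=
  sSup {k | ∃ s : Finset V, (↑s : Set V).Pairwise (fun a b => ¬ G.Adj a b) ∧ s.card = k}

open scoped Classical

set_option linter.unusedSectionVars false

noncomputable section

namespace AP

variable {V : Type*}

/-- independent finset of vertices -/
def Indep (H : SimpleGraph V) (A : Finset V) : Prop :=
  (↑A : Set V).Pairwise fun a b => ¬ H.Adj a b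

lemma indep_mono {H : SimpleGraph V} {A B : Finset V} (h : A ⊆ B) (hB : Indep H B) :
    Indep H A :=
  Set.Pairwise.mono (Finset.coe_subset.2 h) hB

lemma indep_empty (H : SimpleGraph V) : Indep H ∅ := by simp [Indep]

lemma indep_singleton (H : SimpleGraph V) (x : V) : Indep H {x} := by simp [Indep]

variable [Fintype V]

/-- independence number of the induced subgraph on a finset -/
def alphaOn (H : SimpleGraph V) (s : Finset V) : ℕ :=
  (s.powerset.filter (Indep H)).sup Finset.card

def nbr (H : SimpleGraph V) (x : V) : Finset V :=
  Finset.univ.filter (H.Adj x)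

lemma mem_nbr {H : SimpleGraph V} {x y : V} : y ∈ nbr H x ↔ H.Adj x y := by
  simp [nbr]

/-- the RHS quantity, relativized -/
def maxSum (H : SimpleGraph V) (s t : Finset V) : ℕ :=
  (s.powerset.filter (Indep H)).sup
    (fun A => ∑ x ∈ A, max (alphaOn H (s ∩ nbr H x)) (alphaOn H t))

variable {H : SimpleGraph V}

lemma le_alphaOn {A s : Finset V} (hsub : A ⊆ s) (hA : Indep H A) :
    A.card ≤ alphaOn H s :=
  Finset.le_sup (by simp [Finset.mem_filter, Finset.mem_powerset, hsub, hA])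

lemma alphaOn_exists (s : Finset V) :
    ∃ A, A ⊆ s ∧ Indep H A ∧ A.card = alphaOn H s := by
  obtain ⟨A, hA, hEq⟩ := Finset.exists_mem_eq_sup (s.powerset.filter (Indep H))
    ⟨∅, by simp [indep_empty]⟩ Finset.card
  simp only [Finset.mem_filter, Finset.mem_powerset] at hA
  exact ⟨A, hA.1, hA.2, hEq.symm⟩

lemma alphaOn_mono {s s' : Finset V} (h : s ⊆ s') : alphaOn H s ≤ alphaOn H s' := by
  obtain ⟨A, h1, h2, h3⟩ := alphaOn_exists (H := H) s
  rw [← h3]; exact le_alphaOn (h1.trans h) h2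

lemma alphaOn_empty : alphaOn H (∅ : Finset V) = 0 := by
  refine le_antisymm ?_ (Nat.zero_le _)
  obtain ⟨A, h1, h2, h3⟩ := alphaOn_exists (H := H) (∅ : Finset V)
  rw [← h3]
  simp [Finset.subset_empty.1 h1]

lemma le_maxSum {A s : Finset V} (t : Finset V) (hsub : A ⊆ s) (hA : Indep H A) :
    (∑ x ∈ A, max (alphaOn H (s ∩ nbr H x)) (alphaOn H t)) ≤ maxSum H s t :=
  Finset.le_sup (f := fun A => ∑ x ∈ A, max (alphaOn H (s ∩ nbr H x)) (alphaOn H t))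
    (by simp [Finset.mem_filter, Finset.mem_powerset, hsub, hA])

lemma maxSum_le {s t : Finset V} {n : ℕ}
    (h : ∀ A ⊆ s, Indep H A →
      (∑ x ∈ A, max (alphaOn H (s ∩ nbr H x)) (alphaOn H t)) ≤ n) :
    maxSum H s t ≤ n := by
  apply Finset.sup_le
  intro A hA
  simp only [Finset.mem_filter, Finset.mem_powerset] at hA
  exact h A hA.1 hA.2

/-- superadditivity of alphaOn over "fully non-related" parts -/
lemma alphaOn_add_le {A B C : Finset V}
    (hAB : ∀ x ∈ A, ∀ y ∈ B, ¬(x = y ∨ H.Adj x y))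
    (hA : A ⊆ C) (hB : B ⊆ C) :
    alphaOn H A + alphaOn H B ≤ alphaOn H C := by
  obtain ⟨IA, hIA1, hIA2, hIA3⟩ := alphaOn_exists (H := H) A
  obtain ⟨IB, hIB1, hIB2, hIB3⟩ := alphaOn_exists (H := H) B
  have hdisj : Disjoint IA IB := by
    rw [Finset.disjoint_left]
    intro a ha hb
    exact hAB a (hIA1 ha) a (hIB1 hb) (Or.inl rfl)
  have hindep : Indep H (IA ∪ IB) := by
    intro a ha b hb hne
    simp only [Finset.coe_union, Set.mem_union, Finset.mem_coe] at ha hb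
    rcases ha with ha | ha <;> rcases hb with hb | hb
    · exact hIA2 ha hb hne
    · exact fun hadj => hAB a (hIA1 ha) b (hIB1 hb) (Or.inr hadj)
    · exact fun hadj => hAB b (hIA1 hb) a (hIB1 ha) (Or.inr hadj.symm)
    · exact hIB2 ha hb hne
  calc alphaOn H A + alphaOn H B = (IA ∪ IB).card := by
        rw [Finset.card_union_of_disjoint hdisj, hIA3, hIB3]
    _ ≤ alphaOn H C := le_alphaOn (Finset.union_subset (hIA1.trans hA) (hIB1.trans hB)) hindep

/-- alphaOn of a "join" of two finsets is the max -/
lemma alphaOn_join {s1 s2 : Finset V}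
    (hj : ∀ x ∈ s1, ∀ y ∈ s2, H.Adj x y) :
    alphaOn H (s1 ∪ s2) = max (alphaOn H s1) (alphaOn H s2) := by
  refine le_antisymm ?_ (max_le (alphaOn_mono Finset.subset_union_left)
    (alphaOn_mono Finset.subset_union_right))
  obtain ⟨A, h1, h2, h3⟩ := alphaOn_exists (H := H) (s1 ∪ s2)
  rw [← h3]
  by_cases hc : ∀ a ∈ A, a ∈ s1
  · exact le_max_of_le_left (le_alphaOn hc h2)
  · push_neg at hc
    obtain ⟨a, ha, ha1⟩ := hc
    have ha2 : a ∈ s2 := by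
      rcases Finset.mem_union.1 (h1 ha) with h | h
      · exact absurd h ha1
      · exact h
    refine le_max_of_le_right (le_alphaOn ?_ h2)
    intro b hb
    rcases Finset.mem_union.1 (h1 hb) with h | h
    · by_cases hba : b = a
      · subst hba; exact absurd h ha1
      · exact absurd (hj b h a ha2) (h2 hb ha hba)
    · exact h


/-! ### P4 patterns and Seinsche's theorem -/

section NoFintype

omit [Fintype V]

def Pat (H : SimpleGraph V) (a b c d : V) : Prop :=
  H.Adj a b ∧ H.Adj b c ∧ H.Adj c d ∧ ¬H.Adj a c ∧ ¬H.Adj a d ∧ ¬H.Adj b d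

def NoP4 (H : SimpleGraph V) (s : Finset V) : Prop :=
  ¬ ∃ a b c d, a ∈ s ∧ b ∈ s ∧ c ∈ s ∧ d ∈ s ∧ Pat H a b c d

lemma noP4_mono {H : SimpleGraph V} {s s' : Finset V} (h : s ⊆ s') (h' : NoP4 H s') :
    NoP4 H s := by
  rintro ⟨a, b, c, d, ha, hb, hc, hd, hp⟩
  exact h' ⟨a, b, c, d, h ha, h hb, h hc, h hd, hp⟩

lemma Pat.nes {H : SimpleGraph V} {a b c d : V} (h : Pat H a b c d) :
    a ≠ b ∧ a ≠ c ∧ a ≠ d ∧ b ≠ c ∧ b ≠ d ∧ c ≠ d := by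
  obtain ⟨h1, h2, h3, h4, h5, h6⟩ := h
  refine ⟨h1.ne, ?_, ?_, h2.ne, ?_, h3.ne⟩
  · rintro rfl; exact h5 h3
  · rintro rfl; exact h4 h3.symm
  · rintro rfl; exact h5 h1

lemma pat_compl {H : SimpleGraph V} {a b c d : V} (h : Pat Hᶜ a b c d) :
    Pat H b d a c := by
  obtain ⟨hne1, hne2, hne3, hne4, hne5, hne6⟩ := h.nes
  obtain ⟨h1, h2, h3, h4, h5, h6⟩ := h
  rw [compl_adj] at h1 h2 h3
  refine ⟨?_, ?_, ?_, fun hx => h1.2 hx.symm, fun hx => h2.2 hx, fun hx => h3.2 hx.symm⟩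
  · by_contra hx; exact h6 ⟨hne5, hx⟩
  · by_contra hx; exact h5 ⟨hne3, fun hy => hx hy.symm⟩
  · by_contra hx; exact h4 ⟨hne2, hx⟩

lemma pat_to_emb {H : SimpleGraph V} {a b c d : V} (h : Pat H a b c d) :
    Nonempty (pathGraph 4 ↪g H) := by
  obtain ⟨hne1, hne2, hne3, hne4, hne5, hne6⟩ := h.nes
  obtain ⟨h1, h2, h3, h4, h5, h6⟩ := h
  have hsym1 := h1.symm; have hsym2 := h2.symm; have hsym3 := h3.symm
  have h4' : ¬H.Adj c a := fun hx => h4 hx.symm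
  have h5' : ¬H.Adj d a := fun hx => h5 hx.symm
  have h6' : ¬H.Adj d b := fun hx => h6 hx.symm
  refine ⟨⟨⟨![a, b, c, d], ?_⟩, ?_⟩⟩
  · intro i j hij
    fin_cases i <;> fin_cases j <;> simp_all <;> tauto
  · intro i j
    fin_cases i <;> fin_cases j <;>
      simp [pathGraph_adj, Fin.ext_iff] <;> tauto

/-! ### connectivity within a finset -/

def ReachIn (H : SimpleGraph V) (s : Finset V) (a b : V) : Prop :=
  Relation.ReflTransGen (fun x y => x ∈ s ∧ y ∈ s ∧ H.Adj x y) a b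

def ConnIn (H : SimpleGraph V) (s : Finset V) : Prop :=
  ∀ a ∈ s, ∀ b ∈ s, ReachIn H s a b

def Split (H : SimpleGraph V) (s s1 s2 : Finset V) : Prop :=
  s1 ∪ s2 = s ∧ Disjoint s1 s2 ∧ s1.Nonempty ∧ s2.Nonempty ∧
    ∀ x ∈ s1, ∀ y ∈ s2, ¬ H.Adj x y

lemma Split.symm {H : SimpleGraph V} {s s1 s2 : Finset V} (h : Split H s s1 s2) :
    Split H s s2 s1 :=
  ⟨by rw [Finset.union_comm]; exact h.1, h.2.1.symm, h.2.2.2.1, h.2.2.1,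
    fun y hy x hx hadj => h.2.2.2.2 x hx y hy hadj.symm⟩

lemma reachIn_symm {H : SimpleGraph V} {s : Finset V} {a b : V}
    (h : ReachIn H s a b) : ReachIn H s b a := by
  induction h with
  | refl => exact Relation.ReflTransGen.refl
  | tail hzw hstep ih =>
    exact Relation.ReflTransGen.trans
      (Relation.ReflTransGen.single ⟨hstep.2.1, hstep.1, hstep.2.2.symm⟩) ih

lemma split_or_conn (H : SimpleGraph V) (s : Finset V) :
    (∃ s1 s2, Split H s s1 s2) ∨ ConnIn H s := by
  rcases Finset.eq_empty_or_nonempty s with rfl | ⟨a0, ha0⟩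
  · right; intro a ha; simp at ha
  · set s1 : Finset V := s.filter (fun x => ReachIn H s a0 x) with hs1
    set s2 : Finset V := s \ s1 with hs2
    rcases Finset.eq_empty_or_nonempty s2 with h2 | h2
    · right
      have hall : ∀ b ∈ s, ReachIn H s a0 b := by
        intro b hb
        have : b ∈ s1 := by
          by_contra hc
          have : b ∈ s2 := Finset.mem_sdiff.2 ⟨hb, hc⟩
          rw [h2] at this; simp at this
        exact (Finset.mem_filter.1 this).2
      intro a ha b hb
      exact Relation.ReflTransGen.trans (reachIn_symm (hall a ha)) (hall b hb)
    · left
      refine ⟨s1, s2, ?_, Finset.disjoint_sdiff, ⟨a0, ?_⟩, h2, ?_⟩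
      · rw [hs2, Finset.union_sdiff_of_subset (Finset.filter_subset _ _)]
      · exact Finset.mem_filter.2 ⟨ha0, Relation.ReflTransGen.refl⟩
      · intro x hx y hy hadj
        have hx' := Finset.mem_filter.1 hx
        have hy' := Finset.mem_sdiff.1 hy
        exact hy'.2 (Finset.mem_filter.2 ⟨hy'.1,
          Relation.ReflTransGen.tail hx'.2 ⟨hx'.1, hy'.1, hadj⟩⟩)

lemma exists_nonneighbor {H : SimpleGraph V} {s : Finset V} {v : V}
    (hcoconn : ConnIn Hᶜ s) (hv : v ∈ s) (hcard : 2 ≤ s.card) :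
    ∃ u ∈ s, u ≠ v ∧ ¬ H.Adj v u := by
  obtain ⟨w, hw, hwv⟩ := Finset.exists_mem_ne (s := s) (by omega) v
  rcases (hcoconn v hv w hw).cases_head with h | ⟨u, ⟨_, hus, hadj⟩, _⟩
  · exact absurd h.symm hwv
  · rw [compl_adj] at hadj
    exact ⟨u, hus, fun h => hadj.1 h.symm, hadj.2⟩

lemma reachIn_invariant {H : SimpleGraph V} {s : Finset V} {a b : V} {P : V → Prop}
    (hr : ReachIn H s a b) (hstart : P a)
    (hstep : ∀ x y, P x → x ∈ s → y ∈ s → H.Adj x y → P y) : P b := by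
  induction hr with
  | refl => exact hstart
  | tail _ hlast ih => exact hstep _ _ ih hlast.1 hlast.2.1 hlast.2.2

/-- core P4 construction -/
lemma helper2 {H : SimpleGraph V} {s s1 s2 : Finset V} {v u : V}
    (hvs : v ∈ s) (hsplit : Split H (s.erase v) s1 s2)
    (hconn : ConnIn H s)
    (hu : u ∈ s1) (hvu : ¬ H.Adj v u) :
    ∃ a b c d, a ∈ s ∧ b ∈ s ∧ c ∈ s ∧ d ∈ s ∧ Pat H a b c d := by
  obtain ⟨hun, hdisj, h1ne, h2ne, hcross⟩ := hsplit
  have hs1sub : s1 ⊆ s.erase v := hun ▸ Finset.subset_union_left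
  have hs2sub : s2 ⊆ s.erase v := hun ▸ Finset.subset_union_right
  have hs1s : ∀ x ∈ s1, x ∈ s := fun x hx => Finset.mem_of_mem_erase (hs1sub hx)
  have hs2s : ∀ x ∈ s2, x ∈ s := fun x hx => Finset.mem_of_mem_erase (hs2sub hx)
  have hs1v : ∀ x ∈ s1, x ≠ v := fun x hx => Finset.ne_of_mem_erase (hs1sub hx)
  have hs2v : ∀ x ∈ s2, x ≠ v := fun x hx => Finset.ne_of_mem_erase (hs2sub hx)
  have hclass : ∀ y ∈ s, y = v ∨ y ∈ s1 ∨ y ∈ s2 := by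
    intro y hy
    by_cases h : y = v
    · exact Or.inl h
    · have : y ∈ s1 ∪ s2 := hun ▸ Finset.mem_erase.2 ⟨h, hy⟩
      exact Or.inr (Finset.mem_union.1 this)
  -- v has a neighbor in s2
  have hb : ∃ b ∈ s2, H.Adj v b := by
    by_contra hc
    push_neg at hc
    obtain ⟨b1, hb1⟩ := h2ne
    have hP : b1 ∈ s1 ∨ b1 = v := by
      refine reachIn_invariant (P := fun z => z ∈ s1 ∨ z = v) (hconn u (hs1s u hu) b1 (hs2s b1 hb1)) (Or.inl hu) ?_
      intro x y hPx hxs hys hadj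
      rcases hclass y hys with rfl | hy1 | hy2
      · exact Or.inr rfl
      · exact Or.inl hy1
      · rcases hPx with hx1 | rfl
        · exact absurd hadj (hcross x hx1 y hy2)
        · exact absurd hadj (hc y hy2)
    rcases hP with h | h
    · exact (Finset.disjoint_left.1 hdisj h) hb1
    · exact hs2v b1 hb1 h
  obtain ⟨b, hb2, hvb⟩ := hb
  -- an edge between nonneighbors and neighbors of v inside s1
  have hedge : ∃ p ∈ s1, ∃ q ∈ s1, ¬H.Adj v p ∧ H.Adj v q ∧ H.Adj p q := by
    by_contra hc
    push_neg at hc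
    have hP : v ∈ s1 ∧ ¬H.Adj v v := by
      refine reachIn_invariant (P := fun z => z ∈ s1 ∧ ¬H.Adj v z) (hconn u (hs1s u hu) v hvs) ⟨hu, hvu⟩ ?_
      intro x y hPx hxs hys hadj
      rcases hclass y hys with rfl | hy1 | hy2
      · exact absurd hadj.symm hPx.2
      · refine ⟨hy1, fun hvy => ?_⟩
        exact hc x hPx.1 y hy1 hPx.2 hvy hadj
      · exact absurd hadj (hcross x hPx.1 y hy2)
    exact hs1v v hP.1 rfl
  obtain ⟨p, hp1, q, hq1, hvp, hvq, hpq⟩ := hedge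
  refine ⟨p, q, v, b, hs1s p hp1, hs1s q hq1, hvs, hs2s b hb2, ?_⟩
  exact ⟨hpq, hvq.symm, hvb, fun hx => hvp hx.symm,
    hcross p hp1 b hb2, hcross q hq1 b hb2⟩

lemma exists_mem_ne {s : Finset V} (h : 2 ≤ s.card) (v : V) : ∃ u ∈ s, u ≠ v :=
  Finset.exists_mem_ne (by omega) v

/-- Seinsche's theorem -/
lemma seinsche {H : SimpleGraph V} : ∀ s : Finset V, NoP4 H s → 2 ≤ s.card →
    (∃ s1 s2, Split H s s1 s2) ∨ (∃ s1 s2, Split Hᶜ s s1 s2) := by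
  intro s
  induction s using Finset.strongInduction with
  | _ s IH =>
  intro hnp4 hcard
  by_contra hcon
  push_neg at hcon
  obtain ⟨hns, hncs⟩ := hcon
  have hconn : ConnIn H s := by
    rcases split_or_conn H s with ⟨s1, s2, h⟩ | h
    · exact absurd h (by simpa using hns s1 s2)
    · exact h
  have hcoconn : ConnIn Hᶜ s := by
    rcases split_or_conn Hᶜ s with ⟨s1, s2, h⟩ | h
    · exact absurd h (by simpa using hncs s1 s2)
    · exact h
  by_cases hc3 : 3 ≤ s.card
  · -- main case
    obtain ⟨v, hvs⟩ := (Finset.card_pos (s := s)).1 (by omega)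
    obtain ⟨u, hus, huv, hadj⟩ := exists_nonneighbor hcoconn hvs hcard
    have hcoconn' : ConnIn Hᶜᶜ s := by rw [compl_compl]; exact hconn
    obtain ⟨u', hus', huv', hadj'⟩ := exists_nonneighbor (H := Hᶜ) hcoconn' hvs hcard
    have hserase : 2 ≤ (s.erase v).card := by
      rw [Finset.card_erase_of_mem hvs]; omega
    have hnp4' : NoP4 H (s.erase v) := noP4_mono (Finset.erase_subset _ _) hnp4
    rcases IH (s.erase v) (Finset.erase_ssubset hvs) hnp4' hserase with
      ⟨A, B, hsplit⟩ | ⟨A, B, hsplit⟩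
    · have hu' : u ∈ A ∪ B := hsplit.1.symm ▸ Finset.mem_erase.2 ⟨huv, hus⟩
      have hpat : ∃ a b c d, a ∈ s ∧ b ∈ s ∧ c ∈ s ∧ d ∈ s ∧ Pat H a b c d := by
        rcases Finset.mem_union.1 hu' with h | h
        · exact helper2 hvs hsplit hconn h (fun hx => hadj hx)
        · exact helper2 hvs hsplit.symm hconn h (fun hx => hadj hx)
      exact hnp4 hpat
    · have hu' : u' ∈ A ∪ B := hsplit.1.symm ▸ Finset.mem_erase.2 ⟨huv', hus'⟩
      have hpat : ∃ a b c d, a ∈ s ∧ b ∈ s ∧ c ∈ s ∧ d ∈ s ∧ Pat Hᶜ a b c d := by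
        rcases Finset.mem_union.1 hu' with h | h
        · exact helper2 hvs hsplit hcoconn h (fun hx => hadj' hx)
        · exact helper2 hvs hsplit.symm hcoconn h (fun hx => hadj' hx)
      obtain ⟨a, b, c, d, ha, hb, hc, hd, hp⟩ := hpat
      exact hnp4 ⟨b, d, a, c, hb, hd, ha, hc, pat_compl hp⟩
  · -- |s| = 2
    have h2 : s.card = 2 := by omega
    obtain ⟨x, y, hxy, rfl⟩ := Finset.card_eq_two.1 h2
    have hxm : x ∈ ({x, y} : Finset V) := by simp
    have hym : y ∈ ({x, y} : Finset V) := by simp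
    by_cases hadj : H.Adj x y
    · rcases (hcoconn x hxm y hym).cases_head with h | ⟨u, ⟨_, hus, hu⟩, _⟩
      · exact hxy h
      · rw [compl_adj] at hu
        rcases Finset.mem_insert.1 hus with rfl | hus'
        · exact hu.1 rfl
        · rw [Finset.mem_singleton.1 hus'] at hu
          exact hu.2 hadj
    · rcases (hconn x hxm y hym).cases_head with h | ⟨u, ⟨_, hus, hu⟩, _⟩
      · exact hxy h
      · rcases Finset.mem_insert.1 hus with rfl | hus'
        · exact H.irrefl hu
        · rw [Finset.mem_singleton.1 hus'] at hu
          exact hadj hu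

end NoFintype


/-! ### cliques, covers, counting -/

omit [Fintype V] in
lemma clique4 {H : SimpleGraph V} {a b c d : V} (hab : H.Adj a b) (hcd : H.Adj c d)
    (hac : a = c ∨ H.Adj a c) (had : a = d ∨ H.Adj a d)
    (hbc : b = c ∨ H.Adj b c) (hbd : b = d ∨ H.Adj b d) :
    H.IsClique {x | x ∈ (s(a, b) : Sym2 V) ∨ x ∈ (s(c, d) : Sym2 V)} := by
  have key : ∀ x y : V, (x = y ∨ H.Adj x y) → x ≠ y → H.Adj x y :=
    fun x y h hne => h.resolve_left hne
  intro x hx y hy hne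
  simp only [Set.mem_setOf_eq, Sym2.mem_iff] at hx hy
  rcases hx with (rfl | rfl) | (rfl | rfl) <;> rcases hy with (rfl | rfl) | (rfl | rfl)
  · exact absurd rfl hne
  · exact hab
  · exact key _ _ hac hne
  · exact key _ _ had hne
  · exact hab.symm
  · exact absurd rfl hne
  · exact key _ _ hbc hne
  · exact key _ _ hbd hne
  · exact (key _ _ hac hne.symm).symm
  · exact (key _ _ hbc hne.symm).symm
  · exact absurd rfl hne
  · exact hcd
  · exact (key _ _ had hne.symm).symm
  · exact (key _ _ hbd hne.symm).symm
  · exact hcd.symm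
  · exact absurd rfl hne

omit [Fintype V] in
lemma clique_union_join {H : SimpleGraph V} {Q1 Q2 A B : Finset V}
    (h1 : H.IsClique ↑Q1) (h2 : H.IsClique ↑Q2) (hQ1 : Q1 ⊆ A) (hQ2 : Q2 ⊆ B)
    (hj : ∀ x ∈ A, ∀ y ∈ B, H.Adj x y) :
    H.IsClique ↑(Q1 ∪ Q2) := by
  intro x hx y hy hne
  simp only [Finset.coe_union, Set.mem_union, Finset.mem_coe] at hx hy
  rcases hx with hx | hx <;> rcases hy with hy | hy
  · exact h1 hx hy hne
  · exact hj x (hQ1 hx) y (hQ2 hy)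
  · exact (hj y (hQ1 hy) x (hQ2 hx)).symm
  · exact h2 hx hy hne

/-- existence of a clique cover of size alphaOn, for P4-free sets -/
lemma cover_exists {H : SimpleGraph V} : ∀ s : Finset V, NoP4 H s →
    ∃ l : List (Finset V), l.length ≤ alphaOn H s ∧
      (∀ Q ∈ l, H.IsClique ↑Q ∧ Q ⊆ s) ∧ ∀ x ∈ s, ∃ Q ∈ l, x ∈ Q := by
  intro s
  induction s using Finset.strongInduction with
  | _ s IH =>
  intro hnp4
  rcases Finset.eq_empty_or_nonempty s with rfl | hne
  · exact ⟨[], by simp, by simp, by simp⟩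
  by_cases hc2 : 2 ≤ s.card
  · rcases seinsche s hnp4 hc2 with ⟨A, B, hsplit⟩ | ⟨A, B, hsplit⟩
    · -- disjoint union case
      obtain ⟨hun, hdisj, hAne, hBne, hcross⟩ := hsplit
      have hAsub : A ⊆ s := hun ▸ Finset.subset_union_left
      have hBsub : B ⊆ s := hun ▸ Finset.subset_union_right
      have hA : A ⊂ s := by
        refine ⟨hAsub, fun h => ?_⟩
        obtain ⟨b, hb⟩ := hBne
        exact Finset.disjoint_left.1 hdisj (h (hBsub hb)) hb
      have hB : B ⊂ s := by
        refine ⟨hBsub, fun h => ?_⟩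
        obtain ⟨a, ha⟩ := hAne
        exact Finset.disjoint_left.1 hdisj ha (h (hAsub ha))
      obtain ⟨lA, hlA1, hlA2, hlA3⟩ := IH A hA (noP4_mono hAsub hnp4)
      obtain ⟨lB, hlB1, hlB2, hlB3⟩ := IH B hB (noP4_mono hBsub hnp4)
      refine ⟨lA ++ lB, ?_, ?_, ?_⟩
      · rw [List.length_append]
        calc lA.length + lB.length ≤ alphaOn H A + alphaOn H B := by omega
          _ ≤ alphaOn H s := by
              refine alphaOn_add_le ?_ hAsub hBsub
              intro x hx y hy h
              rcases h with rfl | h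
              · exact Finset.disjoint_left.1 hdisj hx hy
              · exact hcross x hx y hy h
      · intro Q hQ
        rcases List.mem_append.1 hQ with h | h
        · exact ⟨(hlA2 Q h).1, (hlA2 Q h).2.trans hAsub⟩
        · exact ⟨(hlB2 Q h).1, (hlB2 Q h).2.trans hBsub⟩
      · intro x hx
        rcases Finset.mem_union.1 (hun ▸ hx : x ∈ A ∪ B) with h | h
        · obtain ⟨Q, hQ1, hQ2⟩ := hlA3 x h
          exact ⟨Q, List.mem_append.2 (Or.inl hQ1), hQ2⟩
        · obtain ⟨Q, hQ1, hQ2⟩ := hlB3 x h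
          exact ⟨Q, List.mem_append.2 (Or.inr hQ1), hQ2⟩
    · -- join case
      obtain ⟨hun, hdisj, hAne, hBne, hcross⟩ := hsplit
      have hcross' : ∀ x ∈ A, ∀ y ∈ B, H.Adj x y := by
        intro x hx y hy
        have hne : x ≠ y := fun h => Finset.disjoint_left.1 hdisj hx (h ▸ hy)
        have := hcross x hx y hy
        rw [compl_adj] at this
        push_neg at this
        exact this hne
      have hAsub : A ⊆ s := hun ▸ Finset.subset_union_left
      have hBsub : B ⊆ s := hun ▸ Finset.subset_union_right
      have hA : A ⊂ s := by
        refine ⟨hAsub, fun h => ?_⟩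
        obtain ⟨b, hb⟩ := hBne
        exact Finset.disjoint_left.1 hdisj (h (hBsub hb)) hb
      have hB : B ⊂ s := by
        refine ⟨hBsub, fun h => ?_⟩
        obtain ⟨a, ha⟩ := hAne
        exact Finset.disjoint_left.1 hdisj ha (h (hAsub ha))
      obtain ⟨lA, hlA1, hlA2, hlA3⟩ := IH A hA (noP4_mono hAsub hnp4)
      obtain ⟨lB, hlB1, hlB2, hlB3⟩ := IH B hB (noP4_mono hBsub hnp4)
      set n := max lA.length lB.length with hn
      have hgetA : ∀ i, H.IsClique ↑(lA.getD i ∅) ∧ lA.getD i ∅ ⊆ A := by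
        intro i
        by_cases h : i < lA.length
        · rw [List.getD_eq_getElem _ _ h]
          exact hlA2 _ (List.getElem_mem _)
        · rw [List.getD_eq_default _ _ (by omega)]
          exact ⟨by simp [SimpleGraph.IsClique], by simp⟩
      have hgetB : ∀ i, H.IsClique ↑(lB.getD i ∅) ∧ lB.getD i ∅ ⊆ B := by
        intro i
        by_cases h : i < lB.length
        · rw [List.getD_eq_getElem _ _ h]
          exact hlB2 _ (List.getElem_mem _)
        · rw [List.getD_eq_default _ _ (by omega)]
          exact ⟨by simp [SimpleGraph.IsClique], by simp⟩
      refine ⟨(List.range n).map (fun i => lA.getD i ∅ ∪ lB.getD i ∅), ?_, ?_, ?_⟩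
      · rw [List.length_map, List.length_range]
        calc n ≤ max (alphaOn H A) (alphaOn H B) := by omega
          _ = alphaOn H (A ∪ B) := (alphaOn_join hcross').symm
          _ = alphaOn H s := by rw [hun]
      · intro Q hQ
        obtain ⟨i, _, rfl⟩ := List.mem_map.1 hQ
        exact ⟨clique_union_join (hgetA i).1 (hgetB i).1 (hgetA i).2 (hgetB i).2 hcross',
          Finset.union_subset ((hgetA i).2.trans hAsub) ((hgetB i).2.trans hBsub)⟩
      · intro x hx
        rcases Finset.mem_union.1 (hun ▸ hx : x ∈ A ∪ B) with h | h
        · obtain ⟨Q, hQ1, hQ2⟩ := hlA3 x h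
          obtain ⟨i, hi, hieq⟩ := List.getElem_of_mem hQ1
          refine ⟨lA.getD i ∅ ∪ lB.getD i ∅, List.mem_map.2 ⟨i, List.mem_range.2 (by omega), rfl⟩, ?_⟩
          rw [List.getD_eq_getElem _ _ hi, hieq]
          exact Finset.mem_union_left _ hQ2
        · obtain ⟨Q, hQ1, hQ2⟩ := hlB3 x h
          obtain ⟨i, hi, hieq⟩ := List.getElem_of_mem hQ1
          refine ⟨lA.getD i ∅ ∪ lB.getD i ∅, List.mem_map.2 ⟨i, List.mem_range.2 (by omega), rfl⟩, ?_⟩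
          rw [List.getD_eq_getElem _ _ hi, hieq]
          exact Finset.mem_union_right _ hQ2
  · -- singleton
    have h1 : s.card = 1 := by
      have := Finset.card_pos.2 hne
      omega
    obtain ⟨v, rfl⟩ := Finset.card_eq_one.1 h1
    refine ⟨[{v}], ?_, ?_, ?_⟩
    · have : ({v} : Finset V).card ≤ alphaOn H {v} :=
        le_alphaOn (le_refl _) (indep_singleton H v)
      simpa using this
    · intro Q hQ
      rw [List.mem_singleton] at hQ
      subst hQ
      exact ⟨by simp [SimpleGraph.IsClique], le_refl _⟩
    · intro x hx
      exact ⟨{v}, List.mem_singleton.2 rfl, hx⟩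

/-- counting pairs covered by a clique list, second coordinates independent -/
lemma countPairs {H : SimpleGraph V} (t' : Finset V) :
    ∀ (l : List (Finset V)) (P : Finset (V × V)),
    (∀ Q ∈ l, H.IsClique ↑Q) →
    (∀ p ∈ P, ∃ Q ∈ l, p.1 ∈ Q) →
    (∀ p ∈ P, p.2 ∈ t') →
    (∀ p ∈ P, ∀ q ∈ P, p ≠ q →
      ¬((p.1 = q.1 ∨ H.Adj p.1 q.1) ∧ (p.2 = q.2 ∨ H.Adj p.2 q.2))) →
    P.card ≤ l.length * alphaOn H t' := by
  intro l
  induction l with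
  | nil =>
    intro P hcl hcov hsnd hind
    have : P = ∅ := by
      apply Finset.eq_empty_of_forall_notMem
      intro p hp
      obtain ⟨Q, hQ, _⟩ := hcov p hp
      simp at hQ
    simp [this]
  | cons Q l ih =>
    intro P hcl hcov hsnd hind
    set P1 := P.filter (fun p => p.1 ∈ Q) with hP1
    set P2 := P.filter (fun p => p.1 ∉ Q) with hP2
    have hcards : P1.card + P2.card = P.card := Finset.card_filter_add_card_filter_not _
    have hQcl : H.IsClique ↑Q := hcl Q List.mem_cons_self
    have hRfst : ∀ p ∈ P1, ∀ q ∈ P1, p.1 = q.1 ∨ H.Adj p.1 q.1 := by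
      intro p hp q hq
      have hp' := Finset.mem_filter.1 hp
      have hq' := Finset.mem_filter.1 hq
      by_cases h : p.1 = q.1
      · exact Or.inl h
      · exact Or.inr (hQcl hp'.2 hq'.2 h)
    have hinj : Set.InjOn Prod.snd (P1 : Set (V × V)) := by
      intro p hp q hq heq
      by_contra hne
      exact hind p (Finset.mem_of_mem_filter _ hp) q (Finset.mem_of_mem_filter _ hq) hne
        ⟨hRfst p hp q hq, Or.inl heq⟩
    have hcard1 : P1.card ≤ alphaOn H t' := by
      rw [← Finset.card_image_of_injOn hinj]
      refine le_alphaOn ?_ ?_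
      · intro y hy
        obtain ⟨p, hp, rfl⟩ := Finset.mem_image.1 hy
        exact hsnd p (Finset.mem_of_mem_filter _ hp)
      · intro y hy z hz hne
        obtain ⟨p, hp, rfl⟩ := Finset.mem_image.1 (Finset.mem_coe.1 hy)
        obtain ⟨q, hq, rfl⟩ := Finset.mem_image.1 (Finset.mem_coe.1 hz)
        have hpq : p ≠ q := fun h => hne (by rw [h])
        intro hadj
        exact hind p (Finset.mem_of_mem_filter _ hp) q (Finset.mem_of_mem_filter _ hq) hpq
          ⟨hRfst p hp q hq, Or.inr hadj⟩
    have hcard2 : P2.card ≤ l.length * alphaOn H t' := by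
      refine ih P2 (fun Q' hQ' => hcl Q' (List.mem_cons_of_mem _ hQ')) ?_
        (fun p hp => hsnd p (Finset.mem_of_mem_filter _ hp))
        (fun p hp q hq hne => hind p (Finset.mem_of_mem_filter _ hp)
          q (Finset.mem_of_mem_filter _ hq) hne)
      intro p hp
      have hp' := Finset.mem_filter.1 hp
      obtain ⟨Q', hQ', hmem⟩ := hcov p hp'.1
      rcases List.mem_cons.1 hQ' with rfl | h
      · exact absurd hmem hp'.2
      · exact ⟨Q', h, hmem⟩
    calc P.card = P1.card + P2.card := hcards.symm
      _ ≤ alphaOn H t' + l.length * alphaOn H t' := by omega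
      _ = (Q :: l).length * alphaOn H t' := by
          rw [List.length_cons, Nat.succ_mul]; omega

omit [Fintype V] in
lemma arith {u τ1 v τ2 β1 β2 a1 a2 w0 : ℕ} (h1 : u + β1 ≤ a1) (h2 : v + β2 ≤ a2)
    (h3 : τ1 + τ2 ≤ w0) :
    u * τ1 + v * τ2 + β1 * β2 ≤ max (a1 * max a2 w0) (a2 * max a1 w0) := by
  rcases le_total v u with h | h
  · refine le_trans ?_ (le_max_left _ _)
    have e1 : u * τ1 + v * τ2 ≤ u * w0 := by nlinarith
    have e2 : β1 * β2 ≤ β1 * a2 := by nlinarith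
    have e3 : u * w0 ≤ u * max a2 w0 := Nat.mul_le_mul_left _ (le_max_right _ _)
    have e4 : β1 * a2 ≤ β1 * max a2 w0 := Nat.mul_le_mul_left _ (le_max_left _ _)
    have e5 : u * max a2 w0 + β1 * max a2 w0 ≤ a1 * max a2 w0 := by
      rw [← Nat.add_mul]; exact Nat.mul_le_mul_right _ h1
    omega
  · refine le_trans ?_ (le_max_right _ _)
    have e1 : u * τ1 + v * τ2 ≤ v * w0 := by nlinarith
    have e2 : β1 * β2 ≤ β2 * a1 := by nlinarith
    have e3 : v * w0 ≤ v * max a1 w0 := Nat.mul_le_mul_left _ (le_max_right _ _)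
    have e4 : β2 * a1 ≤ β2 * max a1 w0 := Nat.mul_le_mul_left _ (le_max_left _ _)
    have e5 : v * max a1 w0 + β2 * max a1 w0 ≤ a2 * max a1 w0 := by
      rw [← Nat.add_mul]; exact Nat.mul_le_mul_right _ h2
    omega



/-! ### pairs machinery -/

omit [Fintype V] in
lemma sym2_cases (e : Sym2 V) : ∃ a b, e = s(a, b) :=
  Sym2.ind (fun a b => ⟨a, b, rfl⟩) e

omit [Fintype V] in
lemma edgeIndep_mono {H : SimpleGraph V} {M N : Finset (Sym2 V)} (h : N ⊆ M)
    (hM : EdgeIndep H ↑M) : EdgeIndep H ↑N :=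
  ⟨fun e he => hM.1 (by exact_mod_cast h (Finset.mem_coe.1 he)),
   Set.Pairwise.mono (by exact_mod_cast h) hM.2⟩

omit [Fintype V] in
lemma conflict {H : SimpleGraph V} {M : Finset (Sym2 V)} (hM : EdgeIndep H ↑M) {a b c d : V}
    (h1 : s(a, b) ∈ M) (h2 : s(c, d) ∈ M) (hne : s(a, b) ≠ s(c, d))
    (hac : a = c ∨ H.Adj a c) (had : a = d ∨ H.Adj a d)
    (hbc : b = c ∨ H.Adj b c) (hbd : b = d ∨ H.Adj b d) : False := by
  have hab : H.Adj a b := by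
    have := hM.1 (Finset.mem_coe.2 h1); rwa [SimpleGraph.mem_edgeSet] at this
  have hcd : H.Adj c d := by
    have := hM.1 (Finset.mem_coe.2 h2); rwa [SimpleGraph.mem_edgeSet] at this
  exact hM.2 (Finset.mem_coe.2 h1) (Finset.mem_coe.2 h2) hne
    (clique4 hab hcd hac had hbc hbd)

def pairs (X Y : Finset V) (M : Finset (Sym2 V)) : Finset (V × V) :=
  (X ×ˢ Y).filter (fun p => s(p.1, p.2) ∈ M)

lemma mem_pairs {X Y : Finset V} {M : Finset (Sym2 V)} {p : V × V} :
    p ∈ pairs X Y M ↔ p.1 ∈ X ∧ p.2 ∈ Y ∧ s(p.1, p.2) ∈ M := by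
  simp [pairs, Finset.mem_filter, Finset.mem_product, and_assoc]

lemma card_pairs {X Y : Finset V} (hXY : Disjoint X Y) (M : Finset (Sym2 V)) :
    (M.filter (fun e => (∃ x ∈ e, x ∈ X) ∧ (∃ y ∈ e, y ∈ Y))).card = (pairs X Y M).card := by
  refine (Finset.card_bij (fun p _ => s(p.1, p.2)) ?_ ?_ ?_).symm
  · intro p hp
    rw [mem_pairs] at hp
    refine Finset.mem_filter.2 ⟨hp.2.2, ⟨p.1, ?_, hp.1⟩, ⟨p.2, ?_, hp.2.1⟩⟩
    · rw [Sym2.mem_iff]; exact Or.inl rfl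
    · rw [Sym2.mem_iff]; exact Or.inr rfl
  · intro p hp q hq heq
    rw [Sym2.eq_iff] at heq
    rw [mem_pairs] at hp hq
    rcases heq with ⟨h1, h2⟩ | ⟨h1, h2⟩
    · exact Prod.ext h1 h2
    · exact absurd (h1 ▸ hp.1) (fun hc => Finset.disjoint_left.1 hXY hc hq.2.1)
  · intro e he
    rw [Finset.mem_filter] at he
    obtain ⟨heM, ⟨x, hxe, hxX⟩, ⟨y, hye, hyY⟩⟩ := he
    obtain ⟨u, w, rfl⟩ := sym2_cases e
    rw [Sym2.mem_iff] at hxe hye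
    have hxy : x ≠ y := fun h => Finset.disjoint_left.1 hXY hxX (h ▸ hyY)
    rcases hxe with rfl | rfl <;> rcases hye with rfl | rfl
    · exact absurd rfl hxy
    · exact ⟨(x, y), mem_pairs.2 ⟨hxX, hyY, heM⟩, rfl⟩
    · exact ⟨(x, y), mem_pairs.2 ⟨hxX, hyY, by rw [Sym2.eq_swap]; exact heM⟩, Sym2.eq_swap⟩
    · exact absurd rfl hxy

lemma pairs_ind {H : SimpleGraph V} {X Y : Finset V} (hXY : Disjoint X Y)
    (hjX : ∀ x ∈ X, ∀ y ∈ Y, H.Adj x y)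
    {M : Finset (Sym2 V)} (hM : EdgeIndep H ↑M) :
    ∀ p ∈ pairs X Y M, ∀ q ∈ pairs X Y M, p ≠ q →
      ¬((p.1 = q.1 ∨ H.Adj p.1 q.1) ∧ (p.2 = q.2 ∨ H.Adj p.2 q.2)) := by
  rintro ⟨a, b⟩ hp ⟨c, d⟩ hq hne ⟨hR1, hR2⟩
  rw [mem_pairs] at hp hq
  obtain ⟨haX, hbY, habM⟩ := hp
  obtain ⟨hcX, hdY, hcdM⟩ := hq
  have hedgene : s(a, b) ≠ s(c, d) := by
    intro h
    rw [Sym2.eq_iff] at h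
    rcases h with ⟨h1, h2⟩ | ⟨h1, h2⟩
    · exact hne (by rw [h1, h2])
    · exact Finset.disjoint_left.1 hXY haX (h1 ▸ hdY)
  exact conflict hM habM hcdM hedgene hR1 (Or.inr (hjX a haX d hdY))
    (Or.inr (hjX c hcX b hbY).symm) hR2

/-- the key bound: pairs between two joined parts, one of them P4-free -/
lemma pairs_bound {H : SimpleGraph V} {X Y : Finset V} (hXY : Disjoint X Y)
    (hjX : ∀ x ∈ X, ∀ y ∈ Y, H.Adj x y) (hnp4 : NoP4 H X)
    {M : Finset (Sym2 V)} (hM : EdgeIndep H ↑M) :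
    (pairs X Y M).card ≤
      alphaOn H ((pairs X Y M).image Prod.fst) * alphaOn H ((pairs X Y M).image Prod.snd) := by
  have hfstsub : (pairs X Y M).image Prod.fst ⊆ X := by
    intro x hx
    obtain ⟨p, hp, rfl⟩ := Finset.mem_image.1 hx
    exact (mem_pairs.1 hp).1
  obtain ⟨l, hl1, hl2, hl3⟩ := cover_exists ((pairs X Y M).image Prod.fst)
    (noP4_mono hfstsub hnp4)
  have := countPairs ((pairs X Y M).image Prod.snd) l (pairs X Y M)
    (fun Q hQ => (hl2 Q hQ).1)
    (fun p hp => hl3 p.1 (Finset.mem_image.2 ⟨p, hp, rfl⟩))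
    (fun p hp => Finset.mem_image.2 ⟨p, hp, rfl⟩)
    (pairs_ind hXY hjX hM)
  calc (pairs X Y M).card ≤ l.length * alphaOn H ((pairs X Y M).image Prod.snd) := this
    _ ≤ _ := Nat.mul_le_mul_right _ hl1

lemma maxSum_exists (s t : Finset V) {H : SimpleGraph V} :
    ∃ A, A ⊆ s ∧ Indep H A ∧
      maxSum H s t = ∑ x ∈ A, max (alphaOn H (s ∩ nbr H x)) (alphaOn H t) := by
  obtain ⟨A, hA, hEq⟩ := Finset.exists_mem_eq_sup (s.powerset.filter (Indep H))
    ⟨∅, by simp [indep_empty]⟩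
    (fun A => ∑ x ∈ A, max (alphaOn H (s ∩ nbr H x)) (alphaOn H t))
  simp only [Finset.mem_filter, Finset.mem_powerset] at hA
  exact ⟨A, hA.1, hA.2, hEq⟩

/-! ### the main induction -/

theorem star2 {H : SimpleGraph V} : ∀ s t : Finset V, ∀ M : Finset (Sym2 V),
    Disjoint s t →
    (∀ x ∈ s, ∀ y ∈ t, H.Adj x y) →
    NoP4 H s →
    EdgeIndep H ↑M →
    (∀ e ∈ M, ∀ x ∈ e, x ∈ s ∪ t) →
    (∀ e ∈ M, ∃ x ∈ e, x ∈ s) →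
    M.card ≤ maxSum H s t := by
  intro s
  induction s using Finset.strongInduction with
  | _ s IH =>
  intro t M hst hjoin hnp4 hM hsup hmeet
  have hMedge : ∀ {a b : V}, s(a, b) ∈ M → H.Adj a b := by
    intro a b h
    have := hM.1 (Finset.mem_coe.2 h)
    rwa [SimpleGraph.mem_edgeSet] at this
  have two_mem : ∀ {e : Sym2 V}, e ∈ M → ∀ {x y : V}, x ∈ e → y ∈ e → x ≠ y → H.Adj x y := by
    intro e he
    induction e using Sym2.ind with
    | _ u w =>
      intro x y hx hy hxy
      rw [Sym2.mem_iff] at hx hy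
      rcases hx with rfl | rfl <;> rcases hy with rfl | rfl
      · exact absurd rfl hxy
      · exact hMedge he
      · exact (hMedge he).symm
      · exact absurd rfl hxy
  rcases Finset.eq_empty_or_nonempty s with rfl | hne
  · have : M = ∅ := by
      apply Finset.eq_empty_of_forall_notMem
      intro e he
      obtain ⟨x, _, hx⟩ := hmeet e he
      simp at hx
    simp [this]
  by_cases hc2 : 2 ≤ s.card
  · rcases seinsche s hnp4 hc2 with ⟨s1, s2, hsplit⟩ | ⟨s1, s2, hsplit⟩
    · -- disjoint union case
      obtain ⟨hun, hdisj, h1ne, h2ne, hcross⟩ := hsplit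
      have h1sub : s1 ⊆ s := hun ▸ Finset.subset_union_left
      have h2sub : s2 ⊆ s := hun ▸ Finset.subset_union_right
      have h1ss : s1 ⊂ s := by
        refine ⟨h1sub, fun h => ?_⟩
        obtain ⟨b, hb⟩ := h2ne
        exact Finset.disjoint_left.1 hdisj (h (h2sub hb)) hb
      have h2ss : s2 ⊂ s := by
        refine ⟨h2sub, fun h => ?_⟩
        obtain ⟨a, ha⟩ := h1ne
        exact Finset.disjoint_left.1 hdisj ha (h (h1sub ha))
      have hMsub : M ⊆ M.filter (fun e => ∃ x ∈ e, x ∈ s1) ∪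
          M.filter (fun e => ∃ x ∈ e, x ∈ s2) := by
        intro e he
        obtain ⟨x, hxe, hxs⟩ := hmeet e he
        rcases Finset.mem_union.1 (hun ▸ hxs : x ∈ s1 ∪ s2) with h | h
        · exact Finset.mem_union_left _ (Finset.mem_filter.2 ⟨he, x, hxe, h⟩)
        · exact Finset.mem_union_right _ (Finset.mem_filter.2 ⟨he, x, hxe, h⟩)
      have hbound : ∀ (u1 u2 : Finset V), Split H s u1 u2 → u1 ⊂ s →
          (M.filter (fun e => ∃ x ∈ e, x ∈ u1)).card ≤ maxSum H u1 t := by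
        intro u1 u2 hsp hss
        obtain ⟨hun', hdisj', _, _, hcross'⟩ := hsp
        have hu1sub : u1 ⊆ s := hun' ▸ Finset.subset_union_left
        refine IH u1 hss t _ (Finset.disjoint_of_subset_left hu1sub hst)
          (fun x hx y hy => hjoin x (hu1sub hx) y hy)
          (noP4_mono hu1sub hnp4)
          (edgeIndep_mono (Finset.filter_subset _ _) hM) ?_ ?_
        · intro e he x hxe
          have he' := Finset.mem_filter.1 he
          obtain ⟨w, hwe, hws1⟩ := he'.2
          rcases Finset.mem_union.1 (hsup e he'.1 x hxe) with hxs | hxt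
          · rcases Finset.mem_union.1 (hun' ▸ hxs : x ∈ u1 ∪ u2) with h | h
            · exact Finset.mem_union_left _ h
            · exfalso
              have hxw : x ≠ w := fun hc => Finset.disjoint_left.1 hdisj' (hc ▸ hws1) h
              exact hcross' w hws1 x h (two_mem he'.1 hwe hxe hxw.symm)
          · exact Finset.mem_union_right _ hxt
        · intro e he
          exact (Finset.mem_filter.1 he).2
      have hb1 := hbound s1 s2 ⟨hun, hdisj, h1ne, h2ne, hcross⟩ h1ss
      have hb2 := hbound s2 s1 (Split.symm ⟨hun, hdisj, h1ne, h2ne, hcross⟩) h2ss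
      obtain ⟨A1, hA1sub, hA1ind, hA1eq⟩ := maxSum_exists s1 t (H := H)
      obtain ⟨A2, hA2sub, hA2ind, hA2eq⟩ := maxSum_exists s2 t (H := H)
      have hdisjA : Disjoint A1 A2 :=
        Finset.disjoint_of_subset_left hA1sub (Finset.disjoint_of_subset_right hA2sub hdisj)
      have hindA : Indep H (A1 ∪ A2) := by
        intro a ha b hb hab
        simp only [Finset.coe_union, Set.mem_union, Finset.mem_coe] at ha hb
        rcases ha with ha | ha <;> rcases hb with hb | hb
        · exact hA1ind ha hb hab
        · exact hcross a (hA1sub ha) b (hA2sub hb)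
        · exact fun h => hcross b (hA1sub hb) a (hA2sub ha) h.symm
        · exact hA2ind ha hb hab
      have hterm1 : ∀ x ∈ A1, s ∩ nbr H x = s1 ∩ nbr H x := by
        intro x hx
        ext y
        simp only [Finset.mem_inter, mem_nbr]
        constructor
        · rintro ⟨hys, hadj⟩
          rcases Finset.mem_union.1 (hun ▸ hys : y ∈ s1 ∪ s2) with h | h
          · exact ⟨h, hadj⟩
          · exact absurd hadj (hcross x (hA1sub hx) y h)
        · rintro ⟨hys, hadj⟩
          exact ⟨h1sub hys, hadj⟩
      have hterm2 : ∀ x ∈ A2, s ∩ nbr H x = s2 ∩ nbr H x := by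
        intro x hx
        ext y
        simp only [Finset.mem_inter, mem_nbr]
        constructor
        · rintro ⟨hys, hadj⟩
          rcases Finset.mem_union.1 (hun ▸ hys : y ∈ s1 ∪ s2) with h | h
          · exact absurd hadj.symm (hcross y h x (hA2sub hx))
          · exact ⟨h, hadj⟩
        · rintro ⟨hys, hadj⟩
          exact ⟨h2sub hys, hadj⟩
      calc M.card ≤ (M.filter (fun e => ∃ x ∈ e, x ∈ s1) ∪
              M.filter (fun e => ∃ x ∈ e, x ∈ s2)).card := Finset.card_le_card hMsub
        _ ≤ (M.filter (fun e => ∃ x ∈ e, x ∈ s1)).card +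
              (M.filter (fun e => ∃ x ∈ e, x ∈ s2)).card := Finset.card_union_le _ _
        _ ≤ maxSum H s1 t + maxSum H s2 t := by omega
        _ = ∑ x ∈ A1 ∪ A2, max (alphaOn H (s ∩ nbr H x)) (alphaOn H t) := by
            rw [Finset.sum_union hdisjA, hA1eq, hA2eq]
            congr 1
            · exact Finset.sum_congr rfl (fun x hx => by rw [hterm1 x hx])
            · exact Finset.sum_congr rfl (fun x hx => by rw [hterm2 x hx])
        _ ≤ maxSum H s t := le_maxSum t (Finset.union_subset (hA1sub.trans h1sub)
              (hA2sub.trans h2sub)) hindA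
    · -- join case
      obtain ⟨hun, hdisj, h1ne, h2ne, hcocross⟩ := hsplit
      have h1sub : s1 ⊆ s := hun ▸ Finset.subset_union_left
      have h2sub : s2 ⊆ s := hun ▸ Finset.subset_union_right
      have hcross : ∀ x ∈ s1, ∀ y ∈ s2, H.Adj x y := by
        intro x hx y hy
        have hne' : x ≠ y := fun h => Finset.disjoint_left.1 hdisj hx (h ▸ hy)
        have := hcocross x hx y hy
        rw [compl_adj] at this
        push_neg at this
        exact this hne'
      have h1ss : s1 ⊂ s := by
        refine ⟨h1sub, fun h => ?_⟩
        obtain ⟨b, hb⟩ := h2ne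
        exact Finset.disjoint_left.1 hdisj (h (h2sub hb)) hb
      have h2ss : s2 ⊂ s := by
        refine ⟨h2sub, fun h => ?_⟩
        obtain ⟨a, ha⟩ := h1ne
        exact Finset.disjoint_left.1 hdisj ha (h (h1sub ha))
      have key : ∀ (u1 u2 : Finset V), u1 ∪ u2 = s → u1 ⊂ s →
          (∀ x ∈ u1, ∀ y ∈ u2, H.Adj x y) →
          (∀ e ∈ M, ∃ x ∈ e, x ∈ u1) → M.card ≤ maxSum H s t := by
        intro u1 u2 hun' hss hj12 hall
        have hu1sub : u1 ⊆ s := hun' ▸ Finset.subset_union_left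
        have hu2sub : u2 ⊆ s := hun' ▸ Finset.subset_union_right
        have hdisj' : Disjoint u1 u2 := by
          rw [Finset.disjoint_left]
          intro a ha1 ha2
          exact H.irrefl (hj12 a ha1 a ha2)
        have hstep : M.card ≤ maxSum H u1 (u2 ∪ t) := by
          refine IH u1 hss (u2 ∪ t) M ?_ ?_ (noP4_mono hu1sub hnp4) hM ?_ hall
          · rw [Finset.disjoint_union_right]
            exact ⟨hdisj', Finset.disjoint_of_subset_left hu1sub hst⟩
          · intro x hx y hy
            rcases Finset.mem_union.1 hy with h | h
            · exact hj12 x hx y h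
            · exact hjoin x (hu1sub hx) y h
          · intro e he x hxe
            have := hsup e he x hxe
            rw [← hun', Finset.union_assoc] at this
            exact this
        refine hstep.trans (maxSum_le ?_)
        intro A hAsub hAind
        have hterm : ∀ x ∈ A, max (alphaOn H (u1 ∩ nbr H x)) (alphaOn H (u2 ∪ t)) =
            max (alphaOn H (s ∩ nbr H x)) (alphaOn H t) := by
          intro x hx
          have he1 : s ∩ nbr H x = (u1 ∩ nbr H x) ∪ u2 := by
            ext y
            simp only [Finset.mem_inter, mem_nbr, Finset.mem_union]
            constructor
            · rintro ⟨hys, hadj⟩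
              rcases Finset.mem_union.1 (hun' ▸ hys : y ∈ u1 ∪ u2) with h | h
              · exact Or.inl ⟨h, hadj⟩
              · exact Or.inr h
            · rintro (⟨hy1, hadj⟩ | hy2)
              · exact ⟨hu1sub hy1, hadj⟩
              · exact ⟨hu2sub hy2, hj12 x (hAsub hx) y hy2⟩
          have he2 : alphaOn H (s ∩ nbr H x) =
              max (alphaOn H (u1 ∩ nbr H x)) (alphaOn H u2) := by
            rw [he1]
            exact alphaOn_join (fun a ha y hy => hj12 a (Finset.mem_inter.1 ha).1 y hy)
          have he3 : alphaOn H (u2 ∪ t) = max (alphaOn H u2) (alphaOn H t) :=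
            alphaOn_join (fun a ha y hy => hjoin a (hu2sub ha) y hy)
          rw [he3, he2]
          exact (max_assoc _ _ _).symm
        calc (∑ x ∈ A, max (alphaOn H (u1 ∩ nbr H x)) (alphaOn H (u2 ∪ t)))
            = ∑ x ∈ A, max (alphaOn H (s ∩ nbr H x)) (alphaOn H t) :=
              Finset.sum_congr rfl hterm
          _ ≤ maxSum H s t := le_maxSum t (hAsub.trans hu1sub) hAind
      by_cases hall1 : ∀ e ∈ M, ∃ x ∈ e, x ∈ s1
      · exact key s1 s2 hun h1ss hcross hall1
      by_cases hall2 : ∀ e ∈ M, ∃ x ∈ e, x ∈ s2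
      · exact key s2 s1 (by rw [Finset.union_comm]; exact hun) h2ss
          (fun x hx y hy => (hcross y hy x hx).symm) hall2
      -- case (c): no internal edges at all
      push_neg at hall1 hall2
      obtain ⟨f1, hf1M, hf1⟩ := hall1
      obtain ⟨f2, hf2M, hf2⟩ := hall2
      have hclassify : ∀ x, x ∈ s ∪ t → (x ∈ s1 ∨ x ∈ s2 ∨ x ∈ t) := by
        intro x hx
        rcases Finset.mem_union.1 hx with h | h
        · rcases Finset.mem_union.1 (hun ▸ h) with h' | h'
          · exact Or.inl h'
          · exact Or.inr (Or.inl h')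
        · exact Or.inr (Or.inr h)
      have hf1' : ∃ y z, s(y, z) ∈ M ∧ y ∈ s2 ∧ (z ∈ s2 ∨ z ∈ t) := by
        obtain ⟨u, w, rfl⟩ := sym2_cases f1
        have hmu : u ∈ s(u, w) := by rw [Sym2.mem_iff]; left; rfl
        have hmw : w ∈ s(u, w) := by rw [Sym2.mem_iff]; right; rfl
        have hu1 : u ∉ s1 := hf1 u hmu
        have hw1 : w ∉ s1 := hf1 w hmw
        obtain ⟨x, hxe, hxs⟩ := hmeet _ hf1M
        rw [Sym2.mem_iff] at hxe
        rcases hxe with rfl | rfl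
        · have hu2 : x ∈ s2 := by
            rcases Finset.mem_union.1 (hun ▸ hxs : x ∈ s1 ∪ s2) with h | h
            · exact absurd h hu1
            · exact h
          have hwz : w ∈ s2 ∨ w ∈ t := by
            rcases hclassify w (hsup _ hf1M w hmw) with h | h | h
            · exact absurd h hw1
            · exact Or.inl h
            · exact Or.inr h
          exact ⟨x, w, hf1M, hu2, hwz⟩
        · have hw2 : x ∈ s2 := by
            rcases Finset.mem_union.1 (hun ▸ hxs : x ∈ s1 ∪ s2) with h | h
            · exact absurd h hw1
            · exact h
          have huz : u ∈ s2 ∨ u ∈ t := by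
            rcases hclassify u (hsup _ hf1M u hmu) with h | h | h
            · exact absurd h hu1
            · exact Or.inl h
            · exact Or.inr h
          exact ⟨x, u, by rw [Sym2.eq_swap]; exact hf1M, hw2, huz⟩
      have hf2' : ∃ y z, s(y, z) ∈ M ∧ y ∈ s1 ∧ (z ∈ s1 ∨ z ∈ t) := by
        obtain ⟨u, w, rfl⟩ := sym2_cases f2
        have hmu : u ∈ s(u, w) := by rw [Sym2.mem_iff]; left; rfl
        have hmw : w ∈ s(u, w) := by rw [Sym2.mem_iff]; right; rfl
        have hu2 : u ∉ s2 := hf2 u hmu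
        have hw2 : w ∉ s2 := hf2 w hmw
        obtain ⟨x, hxe, hxs⟩ := hmeet _ hf2M
        rw [Sym2.mem_iff] at hxe
        rcases hxe with rfl | rfl
        · have hu1' : x ∈ s1 := by
            rcases Finset.mem_union.1 (hun ▸ hxs : x ∈ s1 ∪ s2) with h | h
            · exact h
            · exact absurd h hu2
          have hwz : w ∈ s1 ∨ w ∈ t := by
            rcases hclassify w (hsup _ hf2M w hmw) with h | h | h
            · exact Or.inl h
            · exact absurd h hw2
            · exact Or.inr h
          exact ⟨x, w, hf2M, hu1', hwz⟩
        · have hw1' : x ∈ s1 := by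
            rcases Finset.mem_union.1 (hun ▸ hxs : x ∈ s1 ∪ s2) with h | h
            · exact h
            · exact absurd h hw2
          have huz : u ∈ s1 ∨ u ∈ t := by
            rcases hclassify u (hsup _ hf2M u hmu) with h | h | h
            · exact Or.inl h
            · exact absurd h hu2
            · exact Or.inr h
          exact ⟨x, u, by rw [Sym2.eq_swap]; exact hf2M, hw1', huz⟩
      obtain ⟨y1, z1, hyz1M, hy1s2, hz1⟩ := hf1'
      obtain ⟨y2, z2, hyz2M, hy2s1, hz2⟩ := hf2'
      have hz1s : z1 ∈ s ∨ z1 ∈ t := by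
        rcases hz1 with h | h
        · exact Or.inl (h2sub h)
        · exact Or.inr h
      have hno1 : ∀ a b, s(a, b) ∈ M → a ∈ s1 → b ∈ s1 → False := by
        intro a b hab ha hb
        have hnee : s(a, b) ≠ s(y1, z1) := by
          intro h
          have hmem : a ∈ s(y1, z1) := by
            rw [← h, Sym2.mem_iff]; left; rfl
          rw [Sym2.mem_iff] at hmem
          rcases hmem with rfl | rfl
          · exact Finset.disjoint_left.1 hdisj ha hy1s2
          · rcases hz1 with h' | h'
            · exact Finset.disjoint_left.1 hdisj ha h'
            · exact Finset.disjoint_left.1 hst (h1sub ha) h'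
        refine conflict hM hab hyz1M hnee (Or.inr (hcross a ha y1 hy1s2)) ?_
          (Or.inr (hcross b hb y1 hy1s2)) ?_
        · rcases hz1 with h | h
          · exact Or.inr (hcross a ha z1 h)
          · exact Or.inr (hjoin a (h1sub ha) z1 h)
        · rcases hz1 with h | h
          · exact Or.inr (hcross b hb z1 h)
          · exact Or.inr (hjoin b (h1sub hb) z1 h)
      have hno2 : ∀ a b, s(a, b) ∈ M → a ∈ s2 → b ∈ s2 → False := by
        intro a b hab ha hb
        have hnee : s(a, b) ≠ s(y2, z2) := by
          intro h
          have hmem : a ∈ s(y2, z2) := by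
            rw [← h, Sym2.mem_iff]; left; rfl
          rw [Sym2.mem_iff] at hmem
          rcases hmem with rfl | rfl
          · exact Finset.disjoint_left.1 hdisj hy2s1 ha
          · rcases hz2 with h' | h'
            · exact Finset.disjoint_left.1 hdisj h' ha
            · exact Finset.disjoint_left.1 hst (h2sub ha) h'
        refine conflict hM hab hyz2M hnee (Or.inr (hcross y2 hy2s1 a ha).symm) ?_
          (Or.inr (hcross y2 hy2s1 b hb).symm) ?_
        · rcases hz2 with h | h
          · exact Or.inr (hcross z2 h a ha).symm
          · exact Or.inr (hjoin a (h2sub ha) z2 h)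
        · rcases hz2 with h | h
          · exact Or.inr (hcross z2 h b hb).symm
          · exact Or.inr (hjoin b (h2sub hb) z2 h)
      -- classification of M into the three cross types
      have hMsub : M ⊆ (M.filter (fun e => (∃ x ∈ e, x ∈ s1) ∧ (∃ y ∈ e, y ∈ s2)))
          ∪ (M.filter (fun e => (∃ x ∈ e, x ∈ s1) ∧ (∃ y ∈ e, y ∈ t)))
          ∪ (M.filter (fun e => (∃ x ∈ e, x ∈ s2) ∧ (∃ y ∈ e, y ∈ t))) := by
        intro e he
        obtain ⟨a, b, rfl⟩ := sym2_cases e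
        have hma : a ∈ s(a, b) := by rw [Sym2.mem_iff]; left; rfl
        have hmb : b ∈ s(a, b) := by rw [Sym2.mem_iff]; right; rfl
        rcases hclassify a (hsup _ he a hma) with ha | ha | ha <;>
          rcases hclassify b (hsup _ he b hmb) with hb | hb | hb
        · exact (hno1 a b he ha hb).elim
        · exact Finset.mem_union_left _ (Finset.mem_union_left _
            (Finset.mem_filter.2 ⟨he, ⟨a, hma, ha⟩, ⟨b, hmb, hb⟩⟩))
        · exact Finset.mem_union_left _ (Finset.mem_union_right _
            (Finset.mem_filter.2 ⟨he, ⟨a, hma, ha⟩, ⟨b, hmb, hb⟩⟩))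
        · exact Finset.mem_union_left _ (Finset.mem_union_left _
            (Finset.mem_filter.2 ⟨he, ⟨b, hmb, hb⟩, ⟨a, hma, ha⟩⟩))
        · exact (hno2 a b he ha hb).elim
        · exact Finset.mem_union_right _
            (Finset.mem_filter.2 ⟨he, ⟨a, hma, ha⟩, ⟨b, hmb, hb⟩⟩)
        · exact Finset.mem_union_left _ (Finset.mem_union_right _
            (Finset.mem_filter.2 ⟨he, ⟨b, hmb, hb⟩, ⟨a, hma, ha⟩⟩))
        · exact Finset.mem_union_right _
            (Finset.mem_filter.2 ⟨he, ⟨b, hmb, hb⟩, ⟨a, hma, ha⟩⟩)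
        · exfalso
          obtain ⟨x, hxe, hxs⟩ := hmeet _ he
          rw [Sym2.mem_iff] at hxe
          rcases hxe with rfl | rfl
          · exact Finset.disjoint_left.1 hst hxs ha
          · exact Finset.disjoint_left.1 hst hxs hb
      have hd12 : Disjoint s1 s2 := hdisj
      have hd1t : Disjoint s1 t := Finset.disjoint_of_subset_left h1sub hst
      have hd2t : Disjoint s2 t := Finset.disjoint_of_subset_left h2sub hst
      have hcard : M.card ≤ (pairs s1 s2 M).card + (pairs s1 t M).card
          + (pairs s2 t M).card := by
        have h1 := Finset.card_le_card hMsub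
        have h2 := Finset.card_union_le
          ((M.filter (fun e => (∃ x ∈ e, x ∈ s1) ∧ (∃ y ∈ e, y ∈ s2)))
            ∪ (M.filter (fun e => (∃ x ∈ e, x ∈ s1) ∧ (∃ y ∈ e, y ∈ t))))
          (M.filter (fun e => (∃ x ∈ e, x ∈ s2) ∧ (∃ y ∈ e, y ∈ t)))
        have h3 := Finset.card_union_le
          (M.filter (fun e => (∃ x ∈ e, x ∈ s1) ∧ (∃ y ∈ e, y ∈ s2)))
          (M.filter (fun e => (∃ x ∈ e, x ∈ s1) ∧ (∃ y ∈ e, y ∈ t)))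
        have e1 := card_pairs hd12 M
        have e2 := card_pairs hd1t M
        have e3 := card_pairs hd2t M
        omega
      -- bounds on each pair set
      have hj1t : ∀ x ∈ s1, ∀ y ∈ t, H.Adj x y := fun x hx y hy => hjoin x (h1sub hx) y hy
      have hj2t : ∀ x ∈ s2, ∀ y ∈ t, H.Adj x y := fun x hx y hy => hjoin x (h2sub hx) y hy
      have hb12 := pairs_bound hd12 hcross (noP4_mono h1sub hnp4) hM
      have hb1t := pairs_bound hd1t hj1t (noP4_mono h1sub hnp4) hM
      have hb2t := pairs_bound hd2t hj2t (noP4_mono h2sub hnp4) hM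
      -- image subset facts
      have hfst : ∀ (X Y : Finset V), (pairs X Y M).image Prod.fst ⊆ X := by
        intro X Y x hx
        obtain ⟨p, hp, rfl⟩ := Finset.mem_image.1 hx
        exact (mem_pairs.1 hp).1
      have hsnd : ∀ (X Y : Finset V), (pairs X Y M).image Prod.snd ⊆ Y := by
        intro X Y y hy
        obtain ⟨p, hp, rfl⟩ := Finset.mem_image.1 hy
        exact (mem_pairs.1 hp).2.1
      -- constraint c1
      have c1 : alphaOn H ((pairs s1 t M).image Prod.fst)
          + alphaOn H ((pairs s1 s2 M).image Prod.fst) ≤ alphaOn H s1 := by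
        refine alphaOn_add_le ?_ (hfst s1 t) (hfst s1 s2)
        intro x hx x' hx' hR
        obtain ⟨p, hp, rfl⟩ := Finset.mem_image.1 hx
        obtain ⟨q, hq, rfl⟩ := Finset.mem_image.1 hx'
        rw [mem_pairs] at hp hq
        have hnee : s(p.1, p.2) ≠ s(q.1, q.2) := by
          intro h
          have hmem : p.2 ∈ s(q.1, q.2) := by rw [← h, Sym2.mem_iff]; right; rfl
          rw [Sym2.mem_iff] at hmem
          rcases hmem with h | h
          · exact Finset.disjoint_left.1 hd1t hq.1 (h ▸ hp.2.1)
          · exact Finset.disjoint_left.1 hd2t hq.2.1 (h ▸ hp.2.1)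
        exact conflict hM hp.2.2 hq.2.2 hnee hR
          (Or.inr (hcross p.1 hp.1 q.2 hq.2.1))
          (Or.inr (hjoin q.1 (h1sub hq.1) p.2 hp.2.1).symm)
          (Or.inr (hjoin q.2 (h2sub hq.2.1) p.2 hp.2.1).symm)
      -- constraint c2
      have c2 : alphaOn H ((pairs s2 t M).image Prod.fst)
          + alphaOn H ((pairs s1 s2 M).image Prod.snd) ≤ alphaOn H s2 := by
        refine alphaOn_add_le ?_ (hfst s2 t) (hsnd s1 s2)
        intro x hx y hy hR
        obtain ⟨p, hp, rfl⟩ := Finset.mem_image.1 hx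
        obtain ⟨q, hq, rfl⟩ := Finset.mem_image.1 hy
        rw [mem_pairs] at hp hq
        have hnee : s(q.1, q.2) ≠ s(p.1, p.2) := by
          intro h
          have hmem : p.2 ∈ s(q.1, q.2) := by rw [h, Sym2.mem_iff]; right; rfl
          rw [Sym2.mem_iff] at hmem
          rcases hmem with h | h
          · exact Finset.disjoint_left.1 hd1t hq.1 (h ▸ hp.2.1)
          · exact Finset.disjoint_left.1 hd2t hq.2.1 (h ▸ hp.2.1)
        have hbc : q.2 = p.1 ∨ H.Adj q.2 p.1 := by
          rcases hR with h | h
          · exact Or.inl h.symm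
          · exact Or.inr h.symm
        exact conflict hM hq.2.2 hp.2.2 hnee
          (Or.inr (hcross q.1 hq.1 p.1 hp.1))
          (Or.inr (hjoin q.1 (h1sub hq.1) p.2 hp.2.1))
          hbc
          (Or.inr (hjoin q.2 (h2sub hq.2.1) p.2 hp.2.1))
      -- constraint c3
      have c3 : alphaOn H ((pairs s1 t M).image Prod.snd)
          + alphaOn H ((pairs s2 t M).image Prod.snd) ≤ alphaOn H t := by
        refine alphaOn_add_le ?_ (hsnd s1 t) (hsnd s2 t)
        intro u hu w hw hR
        obtain ⟨p, hp, rfl⟩ := Finset.mem_image.1 hu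
        obtain ⟨q, hq, rfl⟩ := Finset.mem_image.1 hw
        rw [mem_pairs] at hp hq
        have hnee : s(p.1, p.2) ≠ s(q.1, q.2) := by
          intro h
          have hmem : p.1 ∈ s(q.1, q.2) := by rw [← h, Sym2.mem_iff]; left; rfl
          rw [Sym2.mem_iff] at hmem
          rcases hmem with h | h
          · exact Finset.disjoint_left.1 hdisj (h ▸ hp.1) hq.1
          · exact Finset.disjoint_left.1 hd1t (h.symm ▸ hp.1) hq.2.1
        exact conflict hM hp.2.2 hq.2.2 hnee
          (Or.inr (hcross p.1 hp.1 q.1 hq.1))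
          (Or.inr (hjoin p.1 (h1sub hp.1) q.2 hq.2.1))
          (Or.inr (hjoin q.1 (h2sub hq.1) p.2 hp.2.1).symm)
          hR
      -- lower bounds on maxSum
      have hMS1 : alphaOn H s1 * max (alphaOn H s2) (alphaOn H t) ≤ maxSum H s t := by
        obtain ⟨A, hAs, hAi, hAc⟩ := alphaOn_exists (H := H) s1
        calc alphaOn H s1 * max (alphaOn H s2) (alphaOn H t)
            = ∑ _x ∈ A, max (alphaOn H s2) (alphaOn H t) := by
              rw [Finset.sum_const, hAc, smul_eq_mul]
          _ ≤ ∑ x ∈ A, max (alphaOn H (s ∩ nbr H x)) (alphaOn H t) := by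
              refine Finset.sum_le_sum ?_
              intro x hx
              have hsub2 : s2 ⊆ s ∩ nbr H x := by
                intro y hy
                exact Finset.mem_inter.2 ⟨h2sub hy, mem_nbr.2 (hcross x (hAs hx) y hy)⟩
              exact max_le_max (alphaOn_mono hsub2) (le_refl _)
          _ ≤ maxSum H s t := le_maxSum t (hAs.trans h1sub) hAi
      have hMS2 : alphaOn H s2 * max (alphaOn H s1) (alphaOn H t) ≤ maxSum H s t := by
        obtain ⟨A, hAs, hAi, hAc⟩ := alphaOn_exists (H := H) s2
        calc alphaOn H s2 * max (alphaOn H s1) (alphaOn H t)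
            = ∑ _x ∈ A, max (alphaOn H s1) (alphaOn H t) := by
              rw [Finset.sum_const, hAc, smul_eq_mul]
          _ ≤ ∑ x ∈ A, max (alphaOn H (s ∩ nbr H x)) (alphaOn H t) := by
              refine Finset.sum_le_sum ?_
              intro x hx
              have hsub1 : s1 ⊆ s ∩ nbr H x := by
                intro y hy
                exact Finset.mem_inter.2 ⟨h1sub hy,
                  mem_nbr.2 (hcross y hy x (hAs hx)).symm⟩
              exact max_le_max (alphaOn_mono hsub1) (le_refl _)
          _ ≤ maxSum H s t := le_maxSum t (hAs.trans h2sub) hAi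
      have harith := arith c1 c2 c3
      calc M.card ≤ (pairs s1 s2 M).card + (pairs s1 t M).card + (pairs s2 t M).card := hcard
        _ ≤ alphaOn H ((pairs s1 t M).image Prod.fst)
              * alphaOn H ((pairs s1 t M).image Prod.snd)
            + alphaOn H ((pairs s2 t M).image Prod.fst)
              * alphaOn H ((pairs s2 t M).image Prod.snd)
            + alphaOn H ((pairs s1 s2 M).image Prod.fst)
              * alphaOn H ((pairs s1 s2 M).image Prod.snd) := by omega
        _ ≤ max (alphaOn H s1 * max (alphaOn H s2) (alphaOn H t))
              (alphaOn H s2 * max (alphaOn H s1) (alphaOn H t)) := harith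
        _ ≤ maxSum H s t := max_le hMS1 hMS2
  · -- singleton case
    have h1 : s.card = 1 := by
      have := Finset.card_pos.2 hne
      omega
    obtain ⟨v, rfl⟩ := Finset.card_eq_one.1 h1
    have hveq : M.filter (fun e => (∃ x ∈ e, x ∈ ({v} : Finset V)) ∧ (∃ y ∈ e, y ∈ t)) = M := by
      refine Finset.filter_true_of_mem ?_
      intro e he
      obtain ⟨a, b, rfl⟩ := sym2_cases e
      have hma : a ∈ s(a, b) := by rw [Sym2.mem_iff]; left; rfl
      have hmb : b ∈ s(a, b) := by rw [Sym2.mem_iff]; right; rfl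
      obtain ⟨x, hxe, hxs⟩ := hmeet _ he
      have hxe' := hxe
      rw [Sym2.mem_iff] at hxe'
      refine ⟨⟨x, hxe, hxs⟩, ?_⟩
      rcases hxe' with rfl | rfl
      · refine ⟨b, hmb, ?_⟩
        rcases Finset.mem_union.1 (hsup _ he b hmb) with h | h
        · exfalso
          rw [Finset.mem_singleton] at h hxs
          subst h; subst hxs
          exact H.irrefl (hMedge he)
        · exact h
      · refine ⟨a, hma, ?_⟩
        rcases Finset.mem_union.1 (hsup _ he a hma) with h | h
        · exfalso
          rw [Finset.mem_singleton] at h hxs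
          subst h; subst hxs
          exact H.irrefl (hMedge he)
        · exact h
    have hdvt : Disjoint ({v} : Finset V) t := hst
    have hcd : M.card = (pairs {v} t M).card := by
      rw [← card_pairs hdvt M, hveq]
    have hclv : H.IsClique (↑({v} : Finset V) : Set V) := by
      intro x hx y hy hxy
      simp only [Finset.coe_singleton, Set.mem_singleton_iff] at hx hy
      exact absurd (hx.trans hy.symm) hxy
    have hbound : (pairs {v} t M).card ≤ alphaOn H t := by
      have := countPairs (H := H) t [{v}] (pairs {v} t M)
        (fun Q hQ => by rw [List.mem_singleton] at hQ; subst hQ; exact hclv)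
        (fun p hp => ⟨{v}, List.mem_singleton.2 rfl, (mem_pairs.1 hp).1⟩)
        (fun p hp => (mem_pairs.1 hp).2.1)
        (pairs_ind hdvt hjoin hM)
      simpa using this
    calc M.card = (pairs {v} t M).card := hcd
      _ ≤ alphaOn H t := hbound
      _ ≤ max (alphaOn H ({v} ∩ nbr H v)) (alphaOn H t) := le_max_right _ _
      _ = ∑ x ∈ ({v} : Finset V), max (alphaOn H ({v} ∩ nbr H x)) (alphaOn H t) := by
          rw [Finset.sum_singleton]
      _ ≤ maxSum H {v} t := le_maxSum t (le_refl _) (indep_singleton H v)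


/-! ### glue with the statement's definitions -/

lemma indepNum_le_card {W : Type*} [Fintype W] (H' : SimpleGraph W) :
    indepNumber H' ≤ Fintype.card W := by
  refine csSup_le ⟨0, ∅, by simp, by simp⟩ ?_
  rintro k ⟨sfin, _, rfl⟩
  exact (Finset.card_le_univ sfin).trans_eq Finset.card_univ

lemma alphaOn_eq (G : SimpleGraph V) (x : V) :
    alphaOn G (nbr G x) = indepNumber (G.induce (G.neighborSet x)) := by
  have hbdd : BddAbove {k | ∃ s : Finset ↥(G.neighborSet x),
      (↑s : Set _).Pairwise (fun a b => ¬ (G.induce (G.neighborSet x)).Adj a b) ∧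
        s.card = k} := by
    refine ⟨Fintype.card ↥(G.neighborSet x), ?_⟩
    rintro k ⟨sfin, _, rfl⟩
    exact (Finset.card_le_univ sfin).trans_eq Finset.card_univ
  apply le_antisymm
  · obtain ⟨A, hAsub, hAind, hAcard⟩ := alphaOn_exists (H := G) (nbr G x)
    rw [← hAcard]
    refine le_csSup hbdd ?_
    have hmemnbr : ∀ a ∈ A, a ∈ G.neighborSet x := by
      intro a ha
      exact (G.mem_neighborSet x a).2 (mem_nbr.1 (hAsub ha))
    refine ⟨A.subtype (· ∈ G.neighborSet x), ?_, ?_⟩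
    · rintro ⟨a, hma⟩ hamem ⟨b, hmb⟩ hbmem hne hadj
      rw [Finset.mem_coe, Finset.mem_subtype] at hamem hbmem
      have hab : a ≠ b := fun h => hne (Subtype.ext h)
      exact hAind hamem hbmem hab hadj
    · rw [Finset.card_subtype, Finset.filter_true_of_mem hmemnbr]
  · refine csSup_le ⟨0, ∅, by simp, by simp⟩ ?_
    rintro k ⟨sfin, hpair, rfl⟩
    have hcard : sfin.card = (sfin.map ⟨Subtype.val, Subtype.val_injective⟩).card :=
      (Finset.card_map _).symm
    rw [hcard]
    refine le_alphaOn ?_ ?_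
    · intro y hy
      obtain ⟨a, ha, rfl⟩ := Finset.mem_map.1 hy
      exact mem_nbr.2 ((G.mem_neighborSet x a.val).1 a.property)
    · intro y hy z hz hne hadj
      simp only [Finset.coe_map, Set.mem_image, Finset.mem_coe] at hy hz
      obtain ⟨a, ha, rfl⟩ := hy
      obtain ⟨b, hb, rfl⟩ := hz
      have hab : a ≠ b := fun h => hne (by rw [h])
      refine hpair (Finset.mem_coe.2 ha) (Finset.mem_coe.2 hb) hab ?_
      exact hadj

end AP

open AP in
theorem alphaPrime_cograph' {V : Type*} [Fintype V] (G : SimpleGraph V)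
    (hcograph : ¬ Nonempty (pathGraph 4 ↪g G)) :
    alphaPrime G =
      sSup {m | ∃ A : Finset V, (↑A : Set V).Pairwise (fun a b => ¬ G.Adj a b) ∧
        ∑ x ∈ A, indepNumber (G.induce (G.neighborSet x)) = m} := by
  have hnp4 : NoP4 G Finset.univ := by
    rintro ⟨a, b, c, d, _, _, _, _, hp⟩
    exact hcograph (pat_to_emb hp)
  have hRbdd : BddAbove {m | ∃ A : Finset V,
      (↑A : Set V).Pairwise (fun a b => ¬ G.Adj a b) ∧
        ∑ x ∈ A, indepNumber (G.induce (G.neighborSet x)) = m} := by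
    refine ⟨Fintype.card V * Fintype.card V, ?_⟩
    rintro m ⟨A, hA, rfl⟩
    calc ∑ x ∈ A, indepNumber (G.induce (G.neighborSet x))
        ≤ ∑ _x ∈ A, Fintype.card V := by
          refine Finset.sum_le_sum ?_
          intro x _
          exact (indepNum_le_card _).trans (Fintype.card_subtype_le _)
      _ = A.card * Fintype.card V := by rw [Finset.sum_const, smul_eq_mul]
      _ ≤ Fintype.card V * Fintype.card V := by
          have := (Finset.card_le_univ A).trans_eq Finset.card_univ
          exact Nat.mul_le_mul_right _ this
  apply le_antisymm
  · refine csSup_le ⟨0, ∅, ⟨by simp, by simp⟩, by simp⟩ ?_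
    rintro k ⟨M, hM, rfl⟩
    have hmeet : ∀ e ∈ M, ∃ x ∈ e, x ∈ (Finset.univ : Finset V) := by
      intro e _
      obtain ⟨a, b, rfl⟩ := sym2_cases e
      exact ⟨a, by rw [Sym2.mem_iff]; left; rfl, Finset.mem_univ a⟩
    have h1 : M.card ≤ maxSum G Finset.univ ∅ :=
      star2 Finset.univ ∅ M (by simp) (by simp) hnp4 hM (by simp) hmeet
    refine h1.trans (maxSum_le ?_)
    intro A _ hAind
    have heq : (∑ x ∈ A, max (alphaOn G (Finset.univ ∩ nbr G x)) (alphaOn G ∅))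
        = ∑ x ∈ A, indepNumber (G.induce (G.neighborSet x)) := by
      refine Finset.sum_congr rfl ?_
      intro x _
      rw [Finset.univ_inter, alphaOn_empty, Nat.max_zero, alphaOn_eq]
    rw [heq]
    exact le_csSup hRbdd ⟨A, hAind, rfl⟩
  · refine csSup_le ⟨0, ∅, by simp, by simp⟩ ?_
    rintro m ⟨A, hAind, rfl⟩
    have hch : ∀ x : V, ∃ B : Finset V, B ⊆ nbr G x ∧ Indep G B ∧
        B.card = indepNumber (G.induce (G.neighborSet x)) := by
      intro x
      obtain ⟨B, h1, h2, h3⟩ := alphaOn_exists (H := G) (nbr G x)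
      exact ⟨B, h1, h2, h3.trans (alphaOn_eq G x)⟩
    choose B hB1 hB2 hB3 using hch
    have hBadj : ∀ x, ∀ y ∈ B x, G.Adj x y := fun x y hy => mem_nbr.1 (hB1 x hy)
    classical
    set M := A.biUnion (fun x => (B x).image (fun y => s(x, y))) with hMdef
    have hinj : ∀ x : V, Set.InjOn (fun y => s(x, y)) ↑(B x) := by
      intro x y hy z hz heq
      rw [Sym2.eq_iff] at heq
      rcases heq with ⟨_, h⟩ | ⟨h1', h2'⟩
      · exact h
      · exfalso
        exact G.irrefl (h1' ▸ hBadj x z (Finset.mem_coe.1 hz))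
    have hdisjim : ∀ x ∈ A, ∀ x' ∈ A, x ≠ x' →
        Disjoint ((B x).image (fun y => s(x, y))) ((B x').image (fun y => s(x', y))) := by
      intro x hx x' hx' hne
      rw [Finset.disjoint_left]
      rintro e he he'
      obtain ⟨y, hy, rfl⟩ := Finset.mem_image.1 he
      obtain ⟨y', hy', heq⟩ := Finset.mem_image.1 he'
      rw [Sym2.eq_iff] at heq
      rcases heq with ⟨h1', _⟩ | ⟨h1', h2'⟩
      · exact hne (h1'.symm)
      · exact hAind hx hx' hne ((h2'.symm ▸ hBadj x' y' hy' : G.Adj x' x)).symm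
    have hcardM : M.card = ∑ x ∈ A, indepNumber (G.induce (G.neighborSet x)) := by
      rw [hMdef, Finset.card_biUnion hdisjim]
      refine Finset.sum_congr rfl ?_
      intro x _
      rw [Finset.card_image_of_injOn (hinj x), hB3]
    have hMind : EdgeIndep G ↑M := by
      constructor
      · intro e he
        rw [Finset.mem_coe, hMdef, Finset.mem_biUnion] at he
        obtain ⟨x, hx, he'⟩ := he
        obtain ⟨y, hy, rfl⟩ := Finset.mem_image.1 he'
        exact (G.mem_edgeSet).2 (hBadj x y hy)
      · rintro e he f hf hnef hclique
        rw [Finset.mem_coe, hMdef, Finset.mem_biUnion] at he hf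
        obtain ⟨x, hx, he'⟩ := he
        obtain ⟨y, hy, rfl⟩ := Finset.mem_image.1 he'
        obtain ⟨x', hx', hf'⟩ := hf
        obtain ⟨y', hy', rfl⟩ := Finset.mem_image.1 hf'
        by_cases hxx : x = x'
        · subst hxx
          have hyy : y ≠ y' := by
            intro h
            exact hnef (by rw [h])
          refine hB2 x hy hy' hyy ?_
          refine hclique ?_ ?_ hyy
          · exact Or.inl (Sym2.mem_iff.2 (Or.inr rfl))
          · exact Or.inr (Sym2.mem_iff.2 (Or.inr rfl))
        · refine hAind hx hx' hxx ?_
          refine hclique ?_ ?_ hxx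
          · exact Or.inl (Sym2.mem_iff.2 (Or.inl rfl))
          · exact Or.inr (Sym2.mem_iff.2 (Or.inl rfl))
    have hLbdd : BddAbove {k | ∃ N : Finset (Sym2 V), EdgeIndep G ↑N ∧ N.card = k} := by
      refine ⟨Fintype.card (Sym2 V), ?_⟩
      rintro k ⟨N, _, rfl⟩
      exact (Finset.card_le_univ N).trans_eq Finset.card_univ
    rw [← hcardM]
    exact le_csSup hLbdd ⟨M, hMind, rfl⟩

end

/-- For a cograph `G` (no induced `P₄`),
`α'(G) = max { Σ_{x ∈ A} α(G[N(x)]) : A independent in G }`. -/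
theorem alphaPrime_cograph {V : Type*} [Fintype V] (G : SimpleGraph V)
    (hcograph : ¬ Nonempty (pathGraph 4 ↪g G)) :
    alphaPrime G =
      sSup {m | ∃ A : Finset V, (↑A : Set V).Pairwise (fun a b => ¬ G.Adj a b) ∧
        ∑ x ∈ A, indepNumber (G.induce (G.neighborSet x)) = m} :=
  alphaPrime_cograph' G hcograph
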